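/- For 1 ≤ r ≤ ⌊ℓ/2⌋, the subspace m_r spanned by { e_{r,s} : r+1 ≤ s ≤ ℓ-r }, { e_{q,ℓ-r+1} : r+1 ≤ q ≤ ℓ-r }, and e_{r,ℓ-r+1} is a Lie subalgebra of the strictly upper triangular matrices, isomorphic to the Heisenberg Lie algebra of dimension 2(ℓ-2r)+1, with center spanned by e_{r,ℓ-r+1}. -/

import Mathlib

noncomputable def E (ℓ : ℕ) (i j : Fin ℓ) : Matrix (Fin ℓ) (Fin ℓ) ℝ :=
  Matrix.single i j 1

/-- The positions (written with `1`-based indices `i j`) of the matrix units spanning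
`m_r`: the positions `(r,s)` with `r+1 ≤ s ≤ ℓ-r`, the positions `(q, ℓ-r+1)` with
`r+1 ≤ q ≤ ℓ-r`, and the position `(r, ℓ-r+1)`. -/
def MPos (ℓ r i j : ℕ) : Prop :=
  (i = r ∧ r + 1 ≤ j ∧ j ≤ ℓ - r) ∨ (j = ℓ - r + 1 ∧ r + 1 ≤ i ∧ i ≤ ℓ - r) ∨
    (i = r ∧ j = ℓ - r + 1)

/-- Membership in `m_r`: supported on the positions `MPos`. -/
def InMr (ℓ r : ℕ) (A : Matrix (Fin ℓ) (Fin ℓ) ℝ) : Prop :=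
  ∀ i j : Fin ℓ, ¬ MPos ℓ r ((i : ℕ) + 1) ((j : ℕ) + 1) → A i j = 0

lemma inMr_E {ℓ r : ℕ} (a b : Fin ℓ) (h : MPos ℓ r ((a : ℕ) + 1) ((b : ℕ) + 1)) :
    InMr ℓ r (E ℓ a b) := by
  intro i j hij
  show Matrix.single a b (1 : ℝ) i j = 0
  apply Matrix.single_apply_of_ne
  rintro ⟨rfl, rfl⟩
  exact hij h

lemma mul_apply_zero {ℓ r : ℕ} (hr1 : 1 ≤ r) (hr2 : 2 * r ≤ ℓ)
    {A B : Matrix (Fin ℓ) (Fin ℓ) ℝ} (hA : InMr ℓ r A) (hB : InMr ℓ r B)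
    (i j : Fin ℓ) (h : ¬ MPos ℓ r ((i : ℕ) + 1) ((j : ℕ) + 1)) : (A * B) i j = 0 := by
  rw [Matrix.mul_apply]
  refine Finset.sum_eq_zero fun k _ => ?_
  by_cases h1 : MPos ℓ r ((i : ℕ) + 1) ((k : ℕ) + 1)
  · have h2 : ¬ MPos ℓ r ((k : ℕ) + 1) ((j : ℕ) + 1) := by
      unfold MPos at *; omega
    rw [hB k j h2, mul_zero]
  · rw [hA i k h1, zero_mul]

lemma EE_same {ℓ : ℕ} (a b d : ℕ) (ha : a < ℓ) (hb : b < ℓ) (hb' : b < ℓ) (hd : d < ℓ) :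
    E ℓ ⟨a, ha⟩ ⟨b, hb⟩ * E ℓ ⟨b, hb'⟩ ⟨d, hd⟩ = E ℓ ⟨a, ha⟩ ⟨d, hd⟩ := by
  unfold E
  rw [Matrix.single_mul_single_same]
  norm_num

lemma EE_ne {ℓ : ℕ} (a b c d : ℕ) (ha : a < ℓ) (hb : b < ℓ) (hc : c < ℓ) (hd : d < ℓ)
    (h : b ≠ c) : E ℓ ⟨a, ha⟩ ⟨b, hb⟩ * E ℓ ⟨c, hc⟩ ⟨d, hd⟩ = 0 := by
  unfold E
  apply Matrix.single_mul_single_of_ne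
  simp only [ne_eq, Fin.mk.injEq]
  exact h

lemma E_mul_left_same {ℓ : ℕ} (a b j : Fin ℓ) (M : Matrix (Fin ℓ) (Fin ℓ) ℝ) :
    (E ℓ a b * M) a j = M b j := by
  unfold E
  rw [Matrix.single_mul_apply_same, one_mul]

lemma E_mul_left_ne {ℓ : ℕ} {a i : Fin ℓ} (b j : Fin ℓ) (h : (i : ℕ) ≠ (a : ℕ))
    (M : Matrix (Fin ℓ) (Fin ℓ) ℝ) : (E ℓ a b * M) i j = 0 := by
  unfold E
  exact Matrix.single_mul_apply_of_ne _ _ _ _ _ (Fin.ne_of_val_ne h) M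

lemma E_mul_right_same {ℓ : ℕ} (a b i : Fin ℓ) (M : Matrix (Fin ℓ) (Fin ℓ) ℝ) :
    (M * E ℓ a b) i b = M i a := by
  unfold E
  rw [Matrix.mul_single_apply_same, mul_one]

lemma E_mul_right_ne {ℓ : ℕ} {b j : Fin ℓ} (a i : Fin ℓ) (h : (j : ℕ) ≠ (b : ℕ))
    (M : Matrix (Fin ℓ) (Fin ℓ) ℝ) : (M * E ℓ a b) i j = 0 := by
  unfold E
  exact Matrix.mul_single_apply_of_ne _ _ _ _ _ (Fin.ne_of_val_ne h) M

lemma E_congr {ℓ : ℕ} {a b p q : Fin ℓ} (h1 : (a : ℕ) = (p : ℕ)) (h2 : (b : ℕ) = (q : ℕ)) :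
    E ℓ a b = E ℓ p q := by
  rw [Fin.ext h1, Fin.ext h2]

/-- For `1 ≤ r ≤ ⌊ℓ/2⌋`, the subspace `m_r` is a Lie subalgebra of the strictly upper
triangular matrices, isomorphic to the Heisenberg Lie algebra of dimension
`2(ℓ-2r)+1` (it has a basis `X_1, …, X_d, Y_1, …, Y_d, Z` with `d = ℓ-2r` whose only
nonzero brackets are `[X_i, Y_i] = Z`), with center spanned by `Z = e_{r, ℓ-r+1}`. -/
theorem stmt2 (ℓ r : ℕ) (hr1 : 1 ≤ r) (hr2 : 2 * r ≤ ℓ) :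
    -- m_r is closed under the bracket [A,B] = AB - BA
    (∀ A B : Matrix (Fin ℓ) (Fin ℓ) ℝ, InMr ℓ r A → InMr ℓ r B →
      InMr ℓ r (A * B - B * A)) ∧
    -- Heisenberg structure of dimension 2(ℓ-2r)+1
    ∃ (X Y : Fin (ℓ - 2 * r) → Matrix (Fin ℓ) (Fin ℓ) ℝ)
      (Z : Matrix (Fin ℓ) (Fin ℓ) ℝ),
      Z = E ℓ ⟨r - 1, by omega⟩ ⟨ℓ - r, by omega⟩ ∧
      (∀ i, InMr ℓ r (X i)) ∧ (∀ i, InMr ℓ r (Y i)) ∧ InMr ℓ r Z ∧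
      LinearIndependent ℝ
        (Sum.elim X (Sum.elim Y (fun _ : Unit => Z))) ∧
      (∀ A : Matrix (Fin ℓ) (Fin ℓ) ℝ, InMr ℓ r A →
        A ∈ Submodule.span ℝ (Set.range (Sum.elim X (Sum.elim Y (fun _ : Unit => Z))))) ∧
      (∀ i j, X i * Y j - Y j * X i = if i = j then Z else 0) ∧
      (∀ i j, X i * X j - X j * X i = 0) ∧
      (∀ i j, Y i * Y j - Y j * Y i = 0) ∧
      (∀ i, X i * Z - Z * X i = 0) ∧
      (∀ i, Y i * Z - Z * Y i = 0) ∧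
      -- the center of m_r is spanned by Z = e_{r, ℓ-r+1}
      (∀ A, InMr ℓ r A →
        ((∀ B, InMr ℓ r B → A * B - B * A = 0) ↔ ∃ c : ℝ, A = c • Z)) := by
  classical
  have hrl1 : r - 1 < ℓ := by omega
  have hrl2 : ℓ - r < ℓ := by omega
  let X : Fin (ℓ - 2 * r) → Matrix (Fin ℓ) (Fin ℓ) ℝ :=
    fun k => E ℓ ⟨r - 1, by omega⟩ ⟨r + (k : ℕ), by have := k.isLt; omega⟩
  let Y : Fin (ℓ - 2 * r) → Matrix (Fin ℓ) (Fin ℓ) ℝ :=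
    fun k => E ℓ ⟨r + (k : ℕ), by have := k.isLt; omega⟩ ⟨ℓ - r, by omega⟩
  let Z : Matrix (Fin ℓ) (Fin ℓ) ℝ := E ℓ ⟨r - 1, by omega⟩ ⟨ℓ - r, by omega⟩
  have hX : ∀ k, InMr ℓ r (X k) := by
    intro k
    refine inMr_E _ _ ?_
    have := k.isLt
    show MPos ℓ r (r - 1 + 1) (r + (k : ℕ) + 1)
    unfold MPos; omega
  have hY : ∀ k, InMr ℓ r (Y k) := by
    intro k
    refine inMr_E _ _ ?_
    have := k.isLt
    show MPos ℓ r (r + (k : ℕ) + 1) (ℓ - r + 1)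
    unfold MPos; omega
  have hZ : InMr ℓ r Z := by
    refine inMr_E _ _ ?_
    show MPos ℓ r (r - 1 + 1) (ℓ - r + 1)
    unfold MPos; omega
  -- Z multiplied by anything in m_r is zero
  have hZB : ∀ B, InMr ℓ r B → Z * B = 0 := by
    intro B hB
    ext i j
    rw [Matrix.zero_apply]
    simp only [Z]
    by_cases hi : (i : ℕ) = r - 1
    · obtain rfl : i = (⟨r - 1, hrl1⟩ : Fin ℓ) := Fin.ext hi
      rw [E_mul_left_same]
      exact hB _ _ (by show ¬ MPos ℓ r (ℓ - r + 1) ((j : ℕ) + 1); unfold MPos; omega)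
    · exact E_mul_left_ne _ _ hi B
  have hBZ : ∀ B, InMr ℓ r B → B * Z = 0 := by
    intro B hB
    ext i j
    rw [Matrix.zero_apply]
    simp only [Z]
    by_cases hj : (j : ℕ) = ℓ - r
    · obtain rfl : j = (⟨ℓ - r, hrl2⟩ : Fin ℓ) := Fin.ext hj
      rw [E_mul_right_same]
      exact hB _ _ (by show ¬ MPos ℓ r ((i : ℕ) + 1) (r - 1 + 1); unfold MPos; omega)
    · exact E_mul_right_ne _ _ hj B
  refine ⟨?_, X, Y, Z, rfl, hX, hY, hZ, ?_, ?_, ?_, ?_, ?_, ?_, ?_, ?_⟩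
  · -- closure under bracket
    intro A B hA hB i j h
    rw [Matrix.sub_apply, mul_apply_zero hr1 hr2 hA hB i j h,
      mul_apply_zero hr1 hr2 hB hA i j h, sub_zero]
  · -- linear independence
    let pos : Fin (ℓ - 2 * r) ⊕ (Fin (ℓ - 2 * r) ⊕ Unit) → Fin ℓ × Fin ℓ :=
      Sum.elim (fun k => (⟨r - 1, by omega⟩, ⟨r + (k : ℕ), by have := k.isLt; omega⟩))
        (Sum.elim (fun k => (⟨r + (k : ℕ), by have := k.isLt; omega⟩, ⟨ℓ - r, by omega⟩))
          (fun _ => (⟨r - 1, by omega⟩, ⟨ℓ - r, by omega⟩)))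
    have hinj : Function.Injective pos := by
      rintro (a | a | ⟨⟩) (b | b | ⟨⟩) h <;>
        simp only [pos, Sum.elim_inl, Sum.elim_inr, Prod.mk.injEq, Fin.mk.injEq] at h
      · simp only [Sum.inl.injEq]; exact Fin.ext (by omega)
      · exfalso; omega
      · exfalso; have := a.isLt; omega
      · exfalso; omega
      · simp only [Sum.inr.injEq, Sum.inl.injEq]; exact Fin.ext (by omega)
      · exfalso; have := a.isLt; omega
      · exfalso; have := b.isLt; omega
      · exfalso; have := b.isLt; omega
      · rfl
    have heq : Sum.elim X (Sum.elim Y fun _ : Unit => Z)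
        = ⇑(Matrix.stdBasis ℝ (Fin ℓ) (Fin ℓ)) ∘ pos := by
      funext x
      rcases x with k | k | ⟨⟩ <;>
        simp only [Sum.elim_inl, Sum.elim_inr, Function.comp_apply, pos, X, Y, Z, E,
          Matrix.stdBasis_eq_single]
    rw [heq]
    exact (Matrix.stdBasis ℝ (Fin ℓ) (Fin ℓ)).linearIndependent.comp pos hinj
  · -- spanning
    intro A hA
    rw [Matrix.matrix_eq_sum_single A]
    refine Submodule.sum_mem _ fun p _ => Submodule.sum_mem _ fun q _ => ?_
    by_cases h0 : A p q = 0
    · rw [h0, Matrix.single_zero]; exact Submodule.zero_mem _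
    · have hpq : MPos ℓ r ((p : ℕ) + 1) ((q : ℕ) + 1) := by
        by_contra h; exact h0 (hA p q h)
      rw [show Matrix.single p q (A p q) = A p q • Matrix.single p q (1 : ℝ) by
        rw [Matrix.smul_single, smul_eq_mul, mul_one]]
      refine Submodule.smul_mem _ _ (Submodule.subset_span ?_)
      rcases hpq with ⟨h1, h2, h3⟩ | ⟨h1, h2, h3⟩ | ⟨h1, h2⟩
      · refine ⟨Sum.inl ⟨(q : ℕ) - r, by omega⟩, ?_⟩
        show X _ = _
        simp only [X]
        exact E_congr (show r - 1 = (p : ℕ) by omega)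
          (show r + ((q : ℕ) - r) = (q : ℕ) by omega)
      · refine ⟨Sum.inr (Sum.inl ⟨(p : ℕ) - r, by omega⟩), ?_⟩
        show Y _ = _
        simp only [Y]
        exact E_congr (show r + ((p : ℕ) - r) = (p : ℕ) by omega)
          (show ℓ - r = (q : ℕ) by omega)
      · refine ⟨Sum.inr (Sum.inr ()), ?_⟩
        show Z = _
        simp only [Z]
        exact E_congr (show r - 1 = (p : ℕ) by omega) (show ℓ - r = (q : ℕ) by omega)
  · -- [X i, Y j]
    intro i j
    rcases eq_or_ne i j with rfl | hij
    · have e1 : X i * Y i = Z := by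
        simp only [X, Y, Z]
        rw [EE_same]
      have e2 : Y i * X i = 0 := by
        simp only [X, Y]
        rw [EE_ne]
        omega
      rw [if_pos rfl, e1, e2, sub_zero]
    · have hv : (i : ℕ) ≠ (j : ℕ) := fun hv => hij (Fin.ext hv)
      have e1 : X i * Y j = 0 := by
        simp only [X, Y]
        rw [EE_ne]
        omega
      have e2 : Y j * X i = 0 := by
        simp only [X, Y]
        rw [EE_ne]
        omega
      rw [if_neg hij, e1, e2, sub_zero]
  · -- [X i, X j]
    intro i j
    have e1 : X i * X j = 0 := by
      simp only [X]; rw [EE_ne]; omega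
    have e2 : X j * X i = 0 := by
      simp only [X]; rw [EE_ne]; omega
    rw [e1, e2, sub_zero]
  · -- [Y i, Y j]
    intro i j
    have hi := i.isLt
    have hj := j.isLt
    have e1 : Y i * Y j = 0 := by
      simp only [Y]; rw [EE_ne]; omega
    have e2 : Y j * Y i = 0 := by
      simp only [Y]; rw [EE_ne]; omega
    rw [e1, e2, sub_zero]
  · -- [X i, Z]
    intro i
    have e1 : X i * Z = 0 := by
      simp only [X, Z]; rw [EE_ne]; omega
    have e2 : Z * X i = 0 := by
      simp only [X, Z]; rw [EE_ne]; omega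
    rw [e1, e2, sub_zero]
  · -- [Y i, Z]
    intro i
    have hi := i.isLt
    have e1 : Y i * Z = 0 := by
      simp only [Y, Z]; rw [EE_ne]; omega
    have e2 : Z * Y i = 0 := by
      simp only [Y, Z]; rw [EE_ne]; omega
    rw [e1, e2, sub_zero]
  · -- center
    intro A hA
    constructor
    · intro hcomm
      refine ⟨A ⟨r - 1, by omega⟩ ⟨ℓ - r, by omega⟩, ?_⟩
      ext i j
      by_cases hij : (i : ℕ) = r - 1 ∧ (j : ℕ) = ℓ - r
      · obtain ⟨h1, h2⟩ := hij
        obtain rfl : i = (⟨r - 1, hrl1⟩ : Fin ℓ) := Fin.ext h1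
        obtain rfl : j = (⟨ℓ - r, hrl2⟩ : Fin ℓ) := Fin.ext h2
        have hZij : Z (⟨r - 1, by omega⟩ : Fin ℓ) (⟨ℓ - r, by omega⟩ : Fin ℓ) = 1 := by
          simp only [Z, E]
          exact Matrix.single_apply_same _ _ _
        rw [Matrix.smul_apply, hZij, smul_eq_mul, mul_one]
      · have hZij : Z i j = 0 := by
          simp only [Z, E]
          apply Matrix.single_apply_of_ne
          rintro ⟨rfl, rfl⟩
          exact hij ⟨rfl, rfl⟩
        rw [Matrix.smul_apply, hZij, smul_zero]
        by_cases hm : MPos ℓ r ((i : ℕ) + 1) ((j : ℕ) + 1)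
        · rcases hm with ⟨h1, h2, h3⟩ | ⟨h1, h2, h3⟩ | ⟨h1, h2⟩
          · -- row position: use Y k
            have hk : (j : ℕ) - r < ℓ - 2 * r := by omega
            have hc := congrFun (congrFun (hcomm (Y ⟨(j : ℕ) - r, hk⟩)
              (hY ⟨(j : ℕ) - r, hk⟩)) ⟨r - 1, by omega⟩) ⟨ℓ - r, by omega⟩
            have e1 : (Y ⟨(j : ℕ) - r, hk⟩ * A)
                (⟨r - 1, by omega⟩ : Fin ℓ) (⟨ℓ - r, by omega⟩ : Fin ℓ) = 0 := by
              simp only [Y]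
              exact E_mul_left_ne _ _ (show r - 1 ≠ r + ((j : ℕ) - r) by omega) A
            have e0 : (A * Y ⟨(j : ℕ) - r, hk⟩)
                (⟨r - 1, by omega⟩ : Fin ℓ) (⟨ℓ - r, by omega⟩ : Fin ℓ)
                = A ⟨r - 1, by omega⟩ ⟨r + ((j : ℕ) - r), by omega⟩ := by
              simp only [Y]
              exact E_mul_right_same _ _ _ A
            rw [Matrix.sub_apply, Matrix.zero_apply, e0, e1, sub_zero] at hc
            rw [show i = (⟨r - 1, by omega⟩ : Fin ℓ) from
                Fin.ext (show (i : ℕ) = r - 1 by omega),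
              show j = (⟨r + ((j : ℕ) - r), by omega⟩ : Fin ℓ) from
                Fin.ext (show (j : ℕ) = r + ((j : ℕ) - r) by omega)]
            exact hc
          · -- column position: use X k
            have hk : (i : ℕ) - r < ℓ - 2 * r := by omega
            have hc := congrFun (congrFun (hcomm (X ⟨(i : ℕ) - r, hk⟩)
              (hX ⟨(i : ℕ) - r, hk⟩)) ⟨r - 1, by omega⟩) ⟨ℓ - r, by omega⟩
            have e1 : (A * X ⟨(i : ℕ) - r, hk⟩)
                (⟨r - 1, by omega⟩ : Fin ℓ) (⟨ℓ - r, by omega⟩ : Fin ℓ) = 0 := by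
              simp only [X]
              exact E_mul_right_ne _ _ (show ℓ - r ≠ r + ((i : ℕ) - r) by omega) A
            have e0 : (X ⟨(i : ℕ) - r, hk⟩ * A)
                (⟨r - 1, by omega⟩ : Fin ℓ) (⟨ℓ - r, by omega⟩ : Fin ℓ)
                = A ⟨r + ((i : ℕ) - r), by omega⟩ ⟨ℓ - r, by omega⟩ := by
              simp only [X]
              exact E_mul_left_same _ _ _ A
            rw [Matrix.sub_apply, Matrix.zero_apply, e0, e1, zero_sub, neg_eq_zero] at hc
            rw [show j = (⟨ℓ - r, by omega⟩ : Fin ℓ) from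
                Fin.ext (show (j : ℕ) = ℓ - r by omega),
              show i = (⟨r + ((i : ℕ) - r), by omega⟩ : Fin ℓ) from
                Fin.ext (show (i : ℕ) = r + ((i : ℕ) - r) by omega)]
            exact hc
          · exact absurd ⟨by omega, by omega⟩ hij
        · exact hA i j hm
    · rintro ⟨c, rfl⟩ B hB
      rw [Matrix.smul_mul, Matrix.mul_smul, hZB B hB, hBZ B hB, smul_zero, sub_self]
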